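/- The sequence (f(2^e - 1))_{e ≥ 0} converges to 0 in ℚ_2, where f(n) = ∑_{k=0}^{n} C(n,k)^{-1}. Equivalently, ν_2(f(2^e-1)) → ∞ as e → ∞. -/

import Mathlib

open Finset Polynomial

def f (n : ℕ) : ℚ := ∑ k ∈ Finset.range (n + 1), ((n.choose k : ℚ))⁻¹

def S (N : ℕ) : ℚ := ∑ k ∈ Finset.range N, 2^(k+1) / (k+1)

lemma pairing (n k : ℕ) (hk : k ≤ n) :
    (((n+1).choose k : ℚ))⁻¹ + (((n+1).choose (k+1) : ℚ))⁻¹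
      = (n+2)/(n+1) * ((n.choose k : ℚ))⁻¹ := by
  have h1 : ((n : ℚ)+1) * (n.choose k) = ((n+1).choose (k+1)) * ((k : ℚ)+1) := by
    have := congrArg (Nat.cast : ℕ → ℚ) (Nat.add_one_mul_choose_eq n k)
    push_cast at this; linarith [this]
  have h2 : (((n+1).choose (k+1) : ℕ) : ℚ) * ((k : ℚ)+1) = ((n+1).choose k) * ((n : ℚ)+1-k) := by
    have hcast := congrArg (Nat.cast : ℕ → ℚ) (Nat.choose_succ_right_eq (n+1) k)
    push_cast [Nat.cast_sub (le_trans hk (Nat.le_succ n))] at hcast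
    exact hcast
  have c0 : ((n.choose k : ℕ) : ℚ) ≠ 0 := (Nat.cast_pos.mpr (Nat.choose_pos hk)).ne'
  have c1 : (((n+1).choose k : ℕ) : ℚ) ≠ 0 :=
    (Nat.cast_pos.mpr (Nat.choose_pos (le_trans hk (Nat.le_succ n)))).ne'
  have c2 : (((n+1).choose (k+1) : ℕ) : ℚ) ≠ 0 :=
    (Nat.cast_pos.mpr (Nat.choose_pos (Nat.succ_le_succ hk))).ne'
  have c3 : ((n : ℚ)+1) ≠ 0 := by positivity
  field_simp
  linear_combination ((((n+1).choose (k+1) : ℕ) : ℚ) + (((n+1).choose k : ℕ) : ℚ)) * h1 + ((((n+1).choose (k+1) : ℕ) : ℚ)) * h2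

lemma f_rec (n : ℕ) : 2 * f (n+1) = 2 + (n+2)/(n+1) * f n := by
  have ha : f (n+1) = ∑ k ∈ range (n+2), (((n+1).choose k : ℚ))⁻¹ := rfl
  have h1 : f (n+1) = ∑ k ∈ range (n+1), (((n+1).choose k : ℚ))⁻¹ + (((n+1).choose (n+1) : ℚ))⁻¹ := by
    rw [ha, Finset.sum_range_succ]
  have h2 : f (n+1) = ∑ k ∈ range (n+1), (((n+1).choose (k+1) : ℚ))⁻¹ + (((n+1).choose 0 : ℚ))⁻¹ := by
    rw [ha, Finset.sum_range_succ']
  have : 2 * f (n+1) = ∑ k ∈ range (n+1),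
      ((((n+1).choose k : ℚ))⁻¹ + (((n+1).choose (k+1) : ℚ))⁻¹) + 2 := by
    rw [two_mul]
    nth_rewrite 1 [h1]; nth_rewrite 1 [h2]
    rw [Finset.sum_add_distrib]
    simp [Nat.choose_self, Nat.choose_zero_right]
    ring
  rw [this]
  have : ∀ k ∈ range (n+1), (((n+1).choose k : ℚ))⁻¹ + (((n+1).choose (k+1) : ℚ))⁻¹
      = (n+2)/(n+1) * ((n.choose k : ℚ))⁻¹ := fun k hk =>
    pairing n k (Nat.lt_succ_iff.mp (Finset.mem_range.mp hk))
  rw [Finset.sum_congr rfl this, ← Finset.mul_sum]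
  show ((n:ℚ)+2)/(n+1) * f n + 2 = 2 + (n+2)/(n+1) * f n
  ring

lemma key1 (n : ℕ) : 2^(n+1) * f n = (n+1) * S (n+1) := by
  induction n with
  | zero => simp [f, S]
  | succ n ih =>
    have hne : ((n:ℚ)+1) ≠ 0 := by positivity
    have h := f_rec n
    have hS : S (n+2) = S (n+1) + 2^(n+2)/(n+2) := by
      rw [S, Finset.sum_range_succ]; push_cast; rw [S]; ring_nf
    have expand : (2:ℚ)^(n+1+1) * f (n+1) = 2^(n+1) * (2 * f (n+1)) := by ring
    rw [expand, h, hS]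
    push_cast
    field_simp
    ring_nf
    ring_nf at ih
    nlinarith [ih]

noncomputable def PP (N : ℕ) : ℚ[X] := ∑ k ∈ range N, C (((k:ℚ)+1)⁻¹) * X^(k+1)
noncomputable def AA (N : ℕ) : ℚ[X] := ∑ k ∈ range N, C (((k:ℚ)+1)⁻¹) * (X*(2 - X))^(k+1)
noncomputable def EE (N : ℕ) : ℚ[X] := ∑ i ∈ range N, ∑ m ∈ range (i+1),
  C ((-1)^m * (i.choose m : ℚ) * 2^(i-m) * (((N:ℚ)+m+1))⁻¹) * X^(N+m+1)

lemma dPP (N : ℕ) : derivative (PP N) = ∑ k ∈ range N, X^k := by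
  rw [PP, derivative_sum]
  refine Finset.sum_congr rfl fun k _ => ?_
  rw [derivative_C_mul_X_pow]
  have : (((k:ℚ)+1)⁻¹ * ((k+1 : ℕ) : ℚ)) = 1 := by
    push_cast; rw [inv_mul_cancel₀ (by positivity : ((k:ℚ)+1) ≠ 0)]
  rw [this, C_1, one_mul]
  congr 1

lemma dAA (N : ℕ) : derivative (AA N) = (2 - 2*X) * ∑ k ∈ range N, (X*(2 - X))^k := by
  rw [AA, derivative_sum, Finset.mul_sum]
  refine Finset.sum_congr rfl fun k _ => ?_
  rw [derivative_mul, derivative_C, zero_mul, zero_add, derivative_pow]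
  have hd : derivative (X*(2 - X) : ℚ[X]) = 2 - 2*X := by
    simp [derivative_mul]; ring
  rw [hd]
  simp only [Nat.add_sub_cancel]
  have hc : C (((k:ℚ)+1))⁻¹ * C (((k+1:ℕ)) : ℚ) = 1 := by
    rw [← C_mul]
    have : (((k:ℚ)+1)⁻¹ * ((k+1 : ℕ) : ℚ)) = 1 := by
      push_cast; rw [inv_mul_cancel₀ (by positivity : ((k:ℚ)+1) ≠ 0)]
    rw [this, C_1]
  have hcast : ((k+1 : ℕ) : ℚ[X]) = C (((k+1:ℕ)) : ℚ) := by
    rw [C_eq_natCast]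
  rw [hcast] at *
  linear_combination ((X*(2 - X))^k * (2 - 2*X)) * hc

lemma dEE (N : ℕ) : derivative (EE N) = X^N * ∑ i ∈ range N, (2 - X)^i := by
  rw [EE, derivative_sum, Finset.mul_sum]
  refine Finset.sum_congr rfl fun i _ => ?_
  rw [derivative_sum]
  have h1 : ∀ m ∈ range (i+1),
      derivative (C ((-1)^m * (i.choose m : ℚ) * 2^(i-m) * (((N:ℚ)+m+1))⁻¹) * X^(N+m+1))
      = C ((-1)^m * (i.choose m : ℚ) * 2^(i-m)) * X^(N+m) := by
    intro m _
    rw [derivative_C_mul_X_pow]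
    congr 1
    push_cast
    rw [mul_assoc, inv_mul_cancel₀ (by positivity : ((N:ℚ)+m+1) ≠ 0), mul_one]
  rw [Finset.sum_congr rfl h1]
  have h2 : ((2 - X)^i : ℚ[X]) = ∑ m ∈ range (i+1), C ((-1)^m * (i.choose m : ℚ) * 2^(i-m)) * X^m := by
    have ha := add_pow (-X : ℚ[X]) 2 i
    rw [show ((-X) + 2 : ℚ[X]) = 2 - X by ring] at ha
    rw [ha]
    refine Finset.sum_congr rfl fun m _ => ?_
    simp only [C_mul, C_pow, map_neg, map_one, C_eq_natCast, map_ofNat]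
    ring
  rw [h2, Finset.mul_sum]
  refine Finset.sum_congr rfl fun m _ => ?_
  rw [pow_add]
  ring

lemma L7 (N : ℕ) : (2 - 2*X : ℚ[X]) * ∑ k ∈ range N, (X*(2 - X))^k
    = 2 * ∑ k ∈ range N, X^k - 2 * X^N * ∑ i ∈ range N, (2 - X)^i := by
  have hne : (1 - X : ℚ[X]) ≠ 0 := by
    intro h
    have := congrArg (fun p => Polynomial.coeff p 0) h
    simp at this
  apply mul_left_cancel₀ hne
  have g1 := geom_sum_mul (X*(2 - X) : ℚ[X]) N
  rw [mul_pow] at g1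
  have g2 := geom_sum_mul (X : ℚ[X]) N
  have g3 := geom_sum_mul (2 - X : ℚ[X]) N
  linear_combination (-2 : ℚ[X]) * g1 + 2 * g2 + (2 * X^N) * g3

lemma L8 (N : ℕ) : AA N = 2 * PP N - 2 * EE N := by
  have hd : derivative (AA N - (2 * PP N - 2 * EE N)) = 0 := by
    rw [derivative_sub, derivative_sub, derivative_mul, derivative_mul]
    simp only [derivative_ofNat, zero_mul, zero_add]
    rw [dAA, dPP, dEE, L7]
    ring
  have hc := eq_C_of_derivative_eq_zero hd
  have h0 : (AA N - (2 * PP N - 2 * EE N)).coeff 0 = 0 := by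
    simp only [coeff_sub, coeff_ofNat_mul]
    have a0 : (AA N).coeff 0 = 0 := by
      rw [AA, finset_sum_coeff]
      refine Finset.sum_eq_zero fun k _ => ?_
      rw [coeff_C_mul, coeff_zero_eq_eval_zero]
      simp
    have p0 : (PP N).coeff 0 = 0 := by
      rw [PP, finset_sum_coeff]
      refine Finset.sum_eq_zero fun k _ => ?_
      rw [coeff_C_mul, coeff_X_pow]
      simp
    have e0 : (EE N).coeff 0 = 0 := by
      rw [EE, finset_sum_coeff]
      refine Finset.sum_eq_zero fun i _ => ?_
      rw [finset_sum_coeff]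
      refine Finset.sum_eq_zero fun m _ => ?_
      rw [coeff_C_mul, coeff_X_pow]
      simp
    rw [a0, p0, e0]; ring
  rw [h0, map_zero] at hc
  exact sub_eq_zero.mp hc

lemma key2 (N : ℕ) : S N = ∑ i ∈ range N, ∑ m ∈ range (i+1),
    (-1)^m * (i.choose m : ℚ) * 2^(i-m) * (((N:ℚ)+m+1))⁻¹ * 2^(N+m+1) := by
  have h := congrArg (Polynomial.eval (2:ℚ)) (L8 N)
  have hA : (AA N).eval 2 = 0 := by
    rw [AA, eval_finset_sum]
    refine Finset.sum_eq_zero fun k _ => ?_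
    simp
  have hP : (PP N).eval 2 = S N := by
    rw [PP, eval_finset_sum, S]
    refine Finset.sum_congr rfl fun k _ => ?_
    simp [div_eq_inv_mul]
  have hE : (EE N).eval 2 = ∑ i ∈ range N, ∑ m ∈ range (i+1),
      (-1)^m * (i.choose m : ℚ) * 2^(i-m) * (((N:ℚ)+m+1))⁻¹ * 2^(N+m+1) := by
    rw [EE, eval_finset_sum]
    refine Finset.sum_congr rfl fun i _ => ?_
    rw [eval_finset_sum]
    refine Finset.sum_congr rfl fun m _ => ?_
    simp
  rw [hA, eval_sub, eval_mul, eval_mul, hP, hE] at h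
  simp at h
  linarith [h]

lemma norm_two_pow (n : ℕ) : ‖((2:ℚ_[2]))^n‖ = (2:ℝ)^(-(n:ℤ)) := by
  have := Padic.norm_p_pow (p := 2) n
  simpa using this

lemma norm_odd (u : ℕ) (hu : ¬ 2 ∣ u) : ‖((u:ℚ_[2]))‖ = 1 := by
  have h1 : ‖((u:ℤ) : ℚ_[2])‖ ≤ 1 := Padic.norm_int_le_one _
  have h2 : ¬ ‖((u:ℤ) : ℚ_[2])‖ < 1 := by
    rw [Padic.norm_intCast_lt_one_iff]
    exact_mod_cast fun h => hu (by exact_mod_cast h)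
  push_cast at h1 h2 ⊢
  linarith [lt_or_eq_of_le h1]

lemma norm_nat (j : ℕ) (hj : j ≠ 0) :
    ‖((j:ℚ_[2]))‖ = (2:ℝ)^(-(padicValNat 2 j : ℤ)) := by
  set v := padicValNat 2 j with hv
  have hfac : j.factorization 2 = v := by
    rw [hv, Nat.factorization_def _ Nat.prime_two]
  have hdecomp : 2^v * (j / 2^v) = j := by
    rw [← hfac]; exact Nat.ordProj_mul_ordCompl_eq_self j 2
  have hu : ¬ 2 ∣ (j / 2^v) := by
    rw [← hfac]; exact Nat.not_dvd_ordCompl Nat.prime_two hj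
  have hcast : (j:ℚ_[2]) = (2:ℚ_[2])^v * ((j / 2^v : ℕ) : ℚ_[2]) := by
    have := congrArg (fun n : ℕ => (n : ℚ_[2])) hdecomp
    push_cast at this
    rw [← this]
  rw [hcast, norm_mul, norm_two_pow, norm_odd _ hu, mul_one]

lemma norm_nat_inv (j : ℕ) (hj : j ≠ 0) :
    ‖((j:ℚ_[2]))⁻¹‖ = (2:ℝ)^((padicValNat 2 j : ℤ)) := by
  rw [norm_inv, norm_nat j hj, ← zpow_neg, neg_neg]

lemma two_pow_big (e : ℕ) (he : 2 ≤ e) : e + 2 ≤ 2^e := by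
  induction e with
  | zero => omega
  | succ n ih =>
    rcases Nat.lt_or_ge n 2 with h | h
    · interval_cases n <;> simp_all <;> omega
    · have := ih h
      have : 2^n ≤ 2^(n+1) := Nat.pow_le_pow_right (by norm_num) (Nat.le_succ n)
      have h2 : 2^(n+1) = 2 * 2^n := by ring
      omega

lemma vbound (e i m : ℕ) (he : 2 ≤ e) (hm : m ≤ i) (hi : i < 2^e) :
    padicValNat 2 (2^e + m + 1) ≤ i := by
  have hj : m + 1 ≤ 2^e := by omega
  have harr : 2^e + m + 1 = 2^e + (m+1) := by omega
  rw [harr]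
  rcases eq_or_lt_of_le hj with h | h
  · rw [h, ← two_mul, ← pow_succ']
    rw [padicValNat.prime_pow]
    have := two_pow_big e he
    omega
  · set v := padicValNat 2 (2^e + (m+1)) with hv
    have hdvd : 2^v ∣ 2^e + (m+1) := pow_padicValNat_dvd
    have hvle : v ≤ e := by
      by_contra hc
      push_neg at hc
      have h1 : 2^(e+1) ∣ 2^e + (m+1) := dvd_trans (pow_dvd_pow 2 hc) hdvd
      have h2 : 2^(e+1) ≤ 2^e + (m+1) := Nat.le_of_dvd (by positivity) h1
      have h3 : 2^(e+1) = 2 * 2^e := by ring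
      omega
    have hdvd2 : 2^v ∣ (m+1) := by
      have h2e : (2:ℕ)^v ∣ 2^e := pow_dvd_pow 2 hvle
      exact (Nat.dvd_add_right h2e).mp hdvd
    have := Nat.le_of_dvd (by omega) hdvd2
    have := Nat.lt_two_pow_self (n := v)
    omega

lemma term_bound (e i m : ℕ) (he : 2 ≤ e) (hm : m ≤ i) (hi : i < 2^e) :
    ‖(((-1)^m * ((i.choose m : ℕ) : ℚ) * 2^(i-m) * (((2^e + m + 1 : ℕ) : ℚ))⁻¹
        * 2^(2^e + m + 1) : ℚ) : ℚ_[2])‖ ≤ (2:ℝ)^(-(2^e + 1 : ℤ)) := by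
  have hv := vbound e i m he hm hi
  have hq : (2^e + m + 1 : ℕ) ≠ 0 := by positivity
  have hcast : (((-1)^m * ((i.choose m : ℕ) : ℚ) * 2^(i-m) * (((2^e + m + 1 : ℕ) : ℚ))⁻¹
        * 2^(2^e + m + 1) : ℚ) : ℚ_[2])
      = (-1)^m * ((i.choose m : ℕ) : ℚ_[2]) * (2:ℚ_[2])^(i-m)
        * (((2^e + m + 1 : ℕ) : ℚ_[2]))⁻¹ * (2:ℚ_[2])^(2^e + m + 1) := by
    push_cast
    ring
  rw [hcast]
  rw [norm_mul, norm_mul, norm_mul, norm_mul]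
  have h1 : ‖((-1 : ℚ_[2]))^m‖ = 1 := by
    rw [norm_pow, norm_neg, norm_one, one_pow]
  have h2 : ‖((i.choose m : ℕ) : ℚ_[2])‖ ≤ 1 := by
    have := Padic.norm_int_le_one (p := 2) (i.choose m : ℤ)
    push_cast at this ⊢
    exact this
  have h3 := norm_two_pow (i - m)
  have h4 := norm_nat_inv _ hq
  have h5 := norm_two_pow (2^e + m + 1)
  rw [h1, h3, h4, h5, one_mul]
  have hle : ‖((i.choose m : ℕ) : ℚ_[2])‖ * (2:ℝ)^(-((i-m : ℕ):ℤ)) * (2:ℝ)^((padicValNat 2 (2^e+m+1) : ℤ)) * (2:ℝ)^(-((2^e + m + 1 : ℕ):ℤ))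
      ≤ (2:ℝ)^(-((i-m : ℕ):ℤ)) * (2:ℝ)^((padicValNat 2 (2^e+m+1) : ℤ)) * (2:ℝ)^(-((2^e + m + 1 : ℕ):ℤ)) := by
    have hpos : (0:ℝ) < (2:ℝ)^(-((i-m : ℕ):ℤ)) * (2:ℝ)^((padicValNat 2 (2^e+m+1) : ℤ)) * (2:ℝ)^(-((2^e + m + 1 : ℕ):ℤ)) := by positivity
    nlinarith [norm_nonneg ((i.choose m : ℕ) : ℚ_[2])]
  refine le_trans hle ?_
  rw [← zpow_add₀ (by norm_num : (2:ℝ) ≠ 0), ← zpow_add₀ (by norm_num : (2:ℝ) ≠ 0)]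
  apply zpow_le_zpow_right₀ (by norm_num : (1:ℝ) ≤ 2)
  have hvz : (padicValNat 2 (2^e+m+1) : ℤ) ≤ (i:ℤ) := by exact_mod_cast hv
  have hpow : ((2^e : ℕ) : ℤ) = (2:ℤ)^e := by push_cast; ring
  omega

lemma normS (e : ℕ) (he : 2 ≤ e) :
    ‖((S (2^e) : ℚ) : ℚ_[2])‖ ≤ (2:ℝ)^(-(2^e + 1 : ℤ)) := by
  rw [key2 (2^e)]
  push_cast
  apply IsUltrametricDist.norm_sum_le_of_forall_le_of_nonneg (by positivity)
  intro i hi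
  apply IsUltrametricDist.norm_sum_le_of_forall_le_of_nonneg (by positivity)
  intro m hm
  have hi' : i < 2^e := Finset.mem_range.mp hi
  have hm' : m ≤ i := Nat.lt_succ_iff.mp (Finset.mem_range.mp hm)
  have heq : ((-1:ℚ_[2]))^m * (i.choose m : ℚ_[2]) * 2^(i-m) * ((2:ℚ_[2])^e+m+1)⁻¹ * 2^(2^e+m+1)
      = (((-1)^m * ((i.choose m : ℕ) : ℚ) * 2^(i-m) * (((2^e + m + 1 : ℕ) : ℚ))⁻¹
        * 2^(2^e + m + 1) : ℚ) : ℚ_[2]) := by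
    push_cast
    ring
  rw [heq]  -- may fail if pushed form differs
  exact term_bound e i m he hm' hi'

lemma norm_f (e : ℕ) (he : 2 ≤ e) :
    ‖((f (2^e - 1) : ℚ) : ℚ_[2])‖ ≤ (2:ℝ)^(-(e+1 : ℤ)) := by
  have h1 : (1:ℕ) ≤ 2^e := Nat.one_le_two_pow
  have hkey := key1 (2^e - 1)
  rw [Nat.sub_add_cancel h1] at hkey
  have hc : ((2^e - 1 : ℕ) : ℚ) + 1 = (2:ℚ)^e := by
    rw [Nat.cast_sub h1]; push_cast; ring
  rw [hc] at hkey
  have hcast := congrArg (fun q : ℚ => (q : ℚ_[2])) hkey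
  simp only [Rat.cast_mul, Rat.cast_pow, Rat.cast_ofNat] at hcast
  have hnorm := congrArg norm hcast
  rw [norm_mul, norm_mul, norm_two_pow, norm_two_pow] at hnorm
  have hSb := normS e he
  have hf : ‖((f (2^e - 1) : ℚ) : ℚ_[2])‖
      = (2:ℝ)^((2^e : ℕ) : ℤ) * ((2:ℝ)^(-(e:ℤ)) * ‖((S (2^e) : ℚ) : ℚ_[2])‖) := by
    have h2 : ((2:ℝ)^(-((2^e : ℕ):ℤ))) ≠ 0 := by positivity
    have h3 : (2:ℝ)^(-((2^e : ℕ):ℤ)) * (2:ℝ)^((2^e : ℕ):ℤ) = 1 := by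
      rw [← zpow_add₀ (by norm_num : (2:ℝ) ≠ 0)]; simp
    linear_combination (2:ℝ)^((2^e : ℕ):ℤ) * hnorm - ‖((f (2^e - 1) : ℚ) : ℚ_[2])‖ * h3
  rw [hf]
  have hS' : (2:ℝ)^((2^e : ℕ) : ℤ) * ((2:ℝ)^(-(e:ℤ)) * ‖((S (2^e) : ℚ) : ℚ_[2])‖)
      ≤ (2:ℝ)^((2^e : ℕ) : ℤ) * ((2:ℝ)^(-(e:ℤ)) * (2:ℝ)^(-(2^e + 1 : ℤ))) := by
    apply mul_le_mul_of_nonneg_left _ (by positivity)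
    apply mul_le_mul_of_nonneg_left hSb (by positivity)
  refine le_trans hS' (le_of_eq ?_)
  rw [← zpow_add₀ (by norm_num : (2:ℝ) ≠ 0), ← zpow_add₀ (by norm_num : (2:ℝ) ≠ 0)]
  congr 1
  push_cast
  ring

theorem stmt_9 :
    Filter.Tendsto (fun e : ℕ => ((f (2 ^ e - 1) : ℚ) : ℚ_[2]))
      Filter.atTop (nhds 0) := by
  apply squeeze_zero_norm' (a := fun e : ℕ => (2:ℝ)^(-(e+1:ℤ)))
  · filter_upwards [Filter.eventually_ge_atTop 2] with e he
    exact norm_f e he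
  · have : (fun e : ℕ => (2:ℝ)^(-(e+1:ℤ))) = fun e : ℕ => ((1:ℝ)/2)^(e+1) := by
      funext e
      rw [one_div, ← zpow_natCast ((2:ℝ)⁻¹) (e+1), inv_zpow, ← zpow_neg]
      push_cast
      ring_nf
    rw [this]
    have h2 : Filter.Tendsto (fun n : ℕ => ((1:ℝ)/2)^n) Filter.atTop (nhds 0) :=
      tendsto_pow_atTop_nhds_zero_of_lt_one (by norm_num) (by norm_num)
    exact h2.comp (Filter.tendsto_add_atTop_nat 1)
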